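/- Let d > 2 divide n−1 and let ζ be a primitive d-th root of unity. Then Cat_n(ζ) = C(2(n−1)/d, (n−1)/d). -/

import Mathlib

open scoped Classical

noncomputable def qInt {K : Type*} [Field K] (q : K) (n : ℕ) : K :=
  ∑ i ∈ Finset.range n, q ^ i

noncomputable def qFact {K : Type*} [Field K] (q : K) (n : ℕ) : K :=
  ∏ i ∈ Finset.range n, qInt q (i + 1)

noncomputable def qBinom {K : Type*} [Field K] (q : K) (n k : ℕ) : K :=
  qFact q n / (qFact q k * qFact q (n - k))

noncomputable def qCat {K : Type*} [Field K] (q : K) (n : ℕ) : K :=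
  qBinom q (2 * n) n / qInt q (n + 1)

namespace QCatAux

open Polynomial Finset

noncomputable def qIntP (k : ℕ) : Polynomial ℚ := ∑ i ∈ range k, X ^ i
noncomputable def AP (d j : ℕ) : Polynomial ℚ := ∑ i ∈ range j, (X ^ d) ^ i
noncomputable def qFactP (N : ℕ) : Polynomial ℚ := ∏ k ∈ range N, qIntP (k + 1)
noncomputable def NP (d N : ℕ) : Polynomial ℚ :=
  ∏ k ∈ range N, (if d ∣ (k + 1) then 1 else qIntP (k + 1))

lemma qIntP_ne_zero {k : ℕ} (hk : 0 < k) : qIntP k ≠ 0 := by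
  intro h
  have h1 := congrArg (Polynomial.eval (1 : ℚ)) h
  simp [qIntP, Polynomial.eval_finset_sum] at h1
  omega

lemma qFactP_ne_zero (N : ℕ) : qFactP N ≠ 0 :=
  Finset.prod_ne_zero_iff.mpr fun k _ => qIntP_ne_zero (Nat.succ_pos k)

lemma X_sub_one_ne_zero : (X : Polynomial ℚ) - 1 ≠ 0 := by
  have := Polynomial.X_sub_C_ne_zero (1 : ℚ)
  simpa using this

lemma qIntP_mul_d (d j : ℕ) : qIntP (j * d) = AP d j * qIntP d := by
  apply mul_right_cancel₀ X_sub_one_ne_zero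
  rw [qIntP, geom_sum_mul, mul_assoc, qIntP, geom_sum_mul, AP, geom_sum_mul,
    ← pow_mul, mul_comm d j]

lemma prod_if_dvd {M : Type*} [CommMonoid M] (d : ℕ) (f : ℕ → M) (N : ℕ) :
    ∏ k ∈ range N, (if d ∣ (k + 1) then f (k + 1) else 1)
      = ∏ i ∈ range (N / d), f ((i + 1) * d) := by
  induction N with
  | zero => simp
  | succ N ih =>
    rw [prod_range_succ, ih, Nat.succ_div]
    by_cases h : d ∣ N + 1
    · rw [if_pos h, if_pos h, prod_range_succ]
      congr 1
      have h2 := Nat.div_mul_cancel h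
      rw [Nat.succ_div, if_pos h] at h2
      rw [h2]
    · rw [if_neg h, if_neg h, mul_one, add_zero]

lemma qFactP_eq (d : ℕ) (N : ℕ) :
    qFactP N = (qIntP d) ^ (N / d) * (∏ i ∈ range (N / d), AP d (i + 1)) * NP d N := by
  have split : qFactP N
      = (∏ k ∈ range N, (if d ∣ (k + 1) then qIntP (k + 1) else 1)) * NP d N := by
    rw [qFactP, NP, ← prod_mul_distrib]
    refine prod_congr rfl fun k _ => ?_
    by_cases h : d ∣ (k + 1) <;> simp [h]
  rw [split, prod_if_dvd d (fun k => qIntP k) N]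
  congr 1
  calc ∏ i ∈ range (N / d), qIntP ((i + 1) * d)
      = ∏ i ∈ range (N / d), (AP d (i + 1) * qIntP d) := by
        exact prod_congr rfl fun i _ => qIntP_mul_d d (i + 1)
    _ = (qIntP d) ^ (N / d) * ∏ i ∈ range (N / d), AP d (i + 1) := by
        rw [prod_mul_distrib, prod_const, card_range, mul_comm]

end QCatAux

open QCatAux Polynomial Finset

theorem qCatalan_at_primitive_root (n d : ℕ) (hn : 1 ≤ n) (hd : 2 < d)
    (hdn : d ∣ n - 1) (ζ : ℂ) (hζ : IsPrimitiveRoot ζ d)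
    (P : Polynomial ℚ)
    (hP : algebraMap (Polynomial ℚ) (RatFunc ℚ) P = qCat (RatFunc.X : RatFunc ℚ) n) :
    Polynomial.aeval ζ P = (((2 * (n - 1) / d).choose ((n - 1) / d) : ℕ) : ℂ) := by
  classical
  set m : ℕ := (n - 1) / d with hm
  have hd0 : 0 < d := by omega
  have hnm : n = m * d + 1 := by
    have h := Nat.div_mul_cancel hdn
    rw [← hm] at h
    omega
  have hnd : n / d = m := by
    rw [hnm, mul_comm m d, Nat.mul_add_div hd0, Nat.div_eq_of_lt (by omega), add_zero]
  have h2nd : (2 * n) / d = 2 * m := by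
    have h : 2 * n = d * (2 * m) + 2 := by rw [hnm]; ring
    rw [h, Nat.mul_add_div hd0, Nat.div_eq_of_lt hd, add_zero]
  -- the basic polynomial identity from hP
  have hφ := RatFunc.algebraMap_injective ℚ
  set φ := algebraMap (Polynomial ℚ) (RatFunc ℚ) with hφdef
  have hqInt : ∀ k : ℕ, qInt (RatFunc.X : RatFunc ℚ) k = φ (qIntP k) := by
    intro k
    simp [qInt, qIntP, map_sum, map_pow, hφdef, RatFunc.algebraMap_X]
  have hqFact : ∀ N : ℕ, qFact (RatFunc.X : RatFunc ℚ) N = φ (qFactP N) := by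
    intro N
    simp [qFact, qFactP, map_prod, hqInt]
  have hφne : ∀ p : Polynomial ℚ, p ≠ 0 → φ p ≠ 0 := by
    intro p hp
    simpa using (map_ne_zero_iff φ hφ).mpr hp
  have key0 : P * (qFactP n ^ 2 * qIntP (n + 1)) = qFactP (2 * n) := by
    apply hφ
    have h1 : φ (qFactP n) ≠ 0 := hφne _ (qFactP_ne_zero n)
    have h2 : φ (qIntP (n + 1)) ≠ 0 := hφne _ (qIntP_ne_zero (Nat.succ_pos n))
    rw [map_mul, map_mul, map_pow]
    rw [hP]
    unfold qCat qBinom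
    rw [hqFact, hqFact, hqFact, hqInt]
    have h3 : 2 * n - n = n := by omega
    rw [h3, div_div, pow_two]
    exact div_mul_cancel₀ _ (by
      exact mul_ne_zero (mul_ne_zero h1 h1) h2)
  -- factor out powers of qIntP d
  set D := qIntP d with hD
  set W := ∏ i ∈ range m, AP d (i + 1) with hW
  set U := ∏ i ∈ range (2 * m), AP d (i + 1) with hU
  have hFn : qFactP n = D ^ m * W * NP d n := by
    have h := qFactP_eq d n; rwa [hnd] at h
  have hF2n : qFactP (2 * n) = D ^ (2 * m) * U * NP d (2 * n) := by
    have h := qFactP_eq d (2 * n); rwa [h2nd] at h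
  have Dne : D ≠ 0 := qIntP_ne_zero hd0
  rw [hFn, hF2n] at key0
  have key : P * (W ^ 2 * NP d n ^ 2 * qIntP (n + 1)) = U * NP d (2 * n) := by
    apply mul_left_cancel₀ (pow_ne_zero (2 * m) Dne)
    linear_combination key0
  -- evaluation at ζ
  set S : ℕ → ℂ := fun k => ∑ i ∈ range k, ζ ^ i with hS
  have zd : ζ ^ d = 1 := hζ.pow_eq_one
  have eInt : ∀ k, Polynomial.aeval ζ (qIntP k) = S k := by
    intro k; simp [qIntP, hS, map_sum, map_pow]
  have eAP : ∀ j, Polynomial.aeval ζ (AP d j) = (j : ℂ) := by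
    intro j; simp [AP, map_sum, map_pow, zd]
  have eW : Polynomial.aeval ζ W = (Nat.factorial m : ℂ) := by
    rw [hW, map_prod]
    simp only [eAP]
    rw [← Nat.cast_prod, Finset.prod_range_add_one_eq_factorial]
  have eU : Polynomial.aeval ζ U = (Nat.factorial (2 * m) : ℂ) := by
    rw [hU, map_prod]
    simp only [eAP]
    rw [← Nat.cast_prod, Finset.prod_range_add_one_eq_factorial]
  have Sd : S d = 0 := hζ.geom_sum_eq_zero (by omega)
  have Sadd : ∀ b, S (d + b) = S b := by
    intro b
    show (∑ i ∈ range (d + b), ζ ^ i) = ∑ i ∈ range b, ζ ^ i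
    rw [Finset.sum_range_add]
    have h1 : ∑ x ∈ range b, ζ ^ (d + x) = ∑ x ∈ range b, ζ ^ x :=
      Finset.sum_congr rfl fun x _ => by rw [pow_add, zd, one_mul]
    have h2 : (∑ i ∈ range d, ζ ^ i) = 0 := Sd
    rw [h1, h2, zero_add]
  have Smul : ∀ j b, S (j * d + b) = S b := by
    intro j
    induction j with
    | zero => simp
    | succ j ih =>
      intro b
      have h : (j + 1) * d + b = d + (j * d + b) := by ring
      rw [h, Sadd, ih]
  set h' : ℕ → ℂ := fun k => if d ∣ (k + 1) then 1 else S (k + 1) with hh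
  have eNP : ∀ N, Polynomial.aeval ζ (NP d N) = ∏ k ∈ range N, h' k := by
    intro N
    rw [NP, map_prod]
    refine Finset.prod_congr rfl fun k _ => ?_
    by_cases hk : d ∣ (k + 1) <;> simp [hh, hk, eInt]
  have hshift : ∀ j k, h' (j * d + k) = h' k := by
    intro j k
    have hd1 : j * d + k + 1 = j * d + (k + 1) := by ring
    simp only [hh, hd1, Smul j (k + 1), Nat.dvd_add_right ⟨j, mul_comm j d⟩]
  set Q : ℂ := ∏ k ∈ range d, h' k with hQdef
  have hQ : ∀ j, ∏ k ∈ range (j * d), h' k = Q ^ j := by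
    intro j
    induction j with
    | zero => simp
    | succ j ih =>
      have h : (j + 1) * d = j * d + d := by ring
      rw [h, Finset.prod_range_add, ih]
      have h2 : ∏ k ∈ range d, h' (j * d + k) = Q :=
        Finset.prod_congr rfl fun k _ => hshift j k
      rw [h2, pow_succ]
  have hS1 : S 1 = 1 := by simp [hS]
  have hS2 : S 2 = 1 + ζ := by
    simp [hS, Finset.sum_range_succ]
  have hnd2 : ∀ j r : ℕ, 0 < r → r < d → ¬ d ∣ (j * d + r) := by
    intro j r hr hrd hv
    rw [Nat.dvd_add_right ⟨j, mul_comm j d⟩] at hv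
    exact absurd (Nat.le_of_dvd hr hv) (by omega)
  have eE : Polynomial.aeval ζ (qIntP (n + 1)) = 1 + ζ := by
    rw [eInt]
    have h : n + 1 = m * d + 2 := by omega
    rw [h, Smul, hS2]
  have eNPn : Polynomial.aeval ζ (NP d n) = Q ^ m := by
    rw [eNP, hnm, Finset.prod_range_add, hQ, Finset.prod_range_one]
    have h0 : h' (m * d + 0) = 1 := by
      have : m * d + 0 + 1 = m * d + 1 := by ring
      simp only [hh, this, if_neg (hnd2 m 1 one_pos (by omega)), Smul, hS1]
    rw [h0, mul_one]
  have eNP2n : Polynomial.aeval ζ (NP d (2 * n)) = Q ^ (2 * m) * (1 + ζ) := by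
    rw [eNP]
    have h : 2 * n = 2 * m * d + 2 := by rw [hnm]; ring
    rw [h, Finset.prod_range_add, hQ]
    have h0 : h' (2 * m * d + 0) = 1 := by
      have : 2 * m * d + 0 + 1 = 2 * m * d + 1 := by ring
      simp only [hh, this, if_neg (hnd2 (2 * m) 1 one_pos (by omega)), Smul, hS1]
    have h1 : h' (2 * m * d + 1) = 1 + ζ := by
      have : 2 * m * d + 1 + 1 = 2 * m * d + 2 := by ring
      simp only [hh, this, if_neg (hnd2 (2 * m) 2 (by omega) (by omega)), Smul, hS2]
    rw [show (2 : ℕ) = 1 + 1 from rfl, Finset.prod_range_add, Finset.prod_range_one,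
      Finset.prod_range_one, h0, h1, one_mul]
  -- nonvanishing
  have hSne : ∀ l, 0 < l → l < d → S l ≠ 0 := by
    intro l h1 h2 h0
    have hg := geom_sum_mul ζ l
    have hSl : (∑ i ∈ range l, ζ ^ i) = S l := rfl
    rw [hSl, h0, zero_mul] at hg
    have : ζ ^ l = 1 := by
      have := hg.symm
      rwa [sub_eq_zero] at this
    exact hζ.pow_ne_one_of_pos_of_lt h1.ne' h2 this
  have Qne : Q ≠ 0 := by
    rw [hQdef]
    refine Finset.prod_ne_zero_iff.mpr fun k hk => ?_
    by_cases hkd : d ∣ (k + 1)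
    · simp [hh, hkd]
    · simp only [hh, if_neg hkd]
      have hk' : k < d := Finset.mem_range.mp hk
      have hlt : k + 1 < d := by
        rcases Nat.lt_or_ge (k + 1) d with h | h
        · exact h
        · exact absurd (by omega : k + 1 = d) (fun he => hkd (he ▸ dvd_refl d))
      exact hSne (k + 1) (Nat.succ_pos k) hlt
  have h1ζ : (1 : ℂ) + ζ ≠ 0 := by
    intro h
    have hz : ζ = -1 := by
      have := eq_neg_of_add_eq_zero_right h
      simpa using this
    have : ζ ^ 2 = 1 := by rw [hz]; ring
    exact hζ.pow_ne_one_of_pos_of_lt (by omega) hd this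
  -- put it together
  have final := congrArg (Polynomial.aeval ζ) key
  simp only [map_mul, map_pow] at final
  rw [eW, eNPn, eE, eU, eNP2n] at final
  have hmd : n - 1 = m * d := by omega
  have h2m : 2 * (n - 1) / d = 2 * m := by
    have h : 2 * (n - 1) = 2 * m * d := by rw [hmd]; ring
    rw [h, Nat.mul_div_cancel _ hd0]
  have hc : (((2 * m).choose m : ℕ) : ℂ) * (Nat.factorial m : ℂ) * (Nat.factorial m : ℂ)
      = (Nat.factorial (2 * m) : ℂ) := by
    have h := Nat.choose_mul_factorial_mul_factorial (show m ≤ 2 * m by omega)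
    rw [show 2 * m - m = m by omega] at h
    exact_mod_cast congrArg (Nat.cast : ℕ → ℂ) h
  rw [h2m]
  have K : ((Nat.factorial m : ℂ)) ^ 2 * (Q ^ m) ^ 2 * (1 + ζ) ≠ 0 := by
    refine mul_ne_zero (mul_ne_zero (pow_ne_zero _ ?_) (pow_ne_zero _ (pow_ne_zero _ Qne))) h1ζ
    exact_mod_cast Nat.factorial_ne_zero m
  apply mul_right_cancel₀ K
  rw [final]
  linear_combination (-(Q ^ m) ^ 2 * (1 + ζ)) * hc
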